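/- arXiv:1905.11384 — 2 statements merged into one kernel-verified Lean document; each statement's English description precedes it below -/
import Mathlib

section
/- Identify ℝⁿ with ℝ^{m₁} × ⋯ × ℝ^{m_d} (d ≥ 2). Let f : ℝⁿ → ℝ be C² and strictly convex with unique minimum point x*. Let (x_k)_{k≥0} be the partial-minimization algorithm sequence: x_{k+1} is x_k with the block j_k replaced by the partial minimizer, where j_k maximizes ‖∇_l f(x_k)‖ over l ∈ [d]. Set t_k = f(x_k), and for each k let 0 < α(t_k) ≤ β(t_k) bound all eigenvalues of H(f)(y) on V(t_k) = {y : f(y) ≤ t_k}; κ(t_k) = β(t_k)/α(t_k). Then for every k ≥ 1: ‖x_k − x*‖² ≤ (‖∇f(x₀)‖²/(α(t_k)·α(t₀)))·(1 − 1/(d·κ(t₀)))·∏_{i=1}^{k−1}(1 − 1/((d−1)·κ(t_i))). -/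
open Set Topology Filter

section Aux1

lemma taylor_upper_aux {g g' g'' : ℝ → ℝ} {T M : ℝ} (hT : 0 ≤ T)
    (h1 : ∀ t, HasDerivAt g (g' t) t) (h2 : ∀ t, HasDerivAt g' (g'' t) t)
    (hM : ∀ t ∈ Icc (0:ℝ) T, g'' t ≤ M) :
    g T ≤ g 0 + g' 0 * T + M * T ^ 2 / 2 := by
  set φ : ℝ → ℝ := fun t => g 0 + g' 0 * t + M * t ^ 2 / 2 - g t with hφ
  set ψ : ℝ → ℝ := fun t => g' 0 + M * t - g' t with hψ
  have hd1 : ∀ t, HasDerivAt φ (ψ t) t := by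
    intro t
    have ha : HasDerivAt (fun t : ℝ => g' 0 * t) (g' 0) t := by
      simpa using (hasDerivAt_id t).const_mul (g' 0)
    have hb : HasDerivAt (fun t : ℝ => M * t ^ 2 / 2) (M * t) t := by
      have := ((hasDerivAt_pow 2 t).const_mul M).div_const 2
      refine this.congr_deriv ?_
      norm_num
      ring
    exact ((ha.const_add (g 0)).add hb).sub (h1 t)
  have hd2 : ∀ t, HasDerivAt ψ (M - g'' t) t := by
    intro t
    have hc : HasDerivAt (fun t : ℝ => g' 0 + M * t) M t := by
      simpa using ((hasDerivAt_id t).const_mul M).const_add (g' 0)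
    exact hc.sub (h2 t)
  have hmono' : MonotoneOn ψ (Icc 0 T) := by
    apply monotoneOn_of_deriv_nonneg (convex_Icc 0 T)
      (fun t _ => (hd2 t).continuousAt.continuousWithinAt)
      (fun t _ => (hd2 t).differentiableAt.differentiableWithinAt)
    intro t ht
    rw [(hd2 t).deriv]
    have := hM t (Ioo_subset_Icc_self (by simpa [interior_Icc] using ht))
    linarith
  have hψ0 : ψ 0 = 0 := by simp [hψ]
  have hψnonneg : ∀ t ∈ Icc (0:ℝ) T, 0 ≤ ψ t := by
    intro t ht
    have := hmono' (left_mem_Icc.2 hT) ht ht.1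
    linarith [hψ0 ▸ this]
  have hmono : MonotoneOn φ (Icc 0 T) := by
    apply monotoneOn_of_deriv_nonneg (convex_Icc 0 T)
      (fun t _ => (hd1 t).continuousAt.continuousWithinAt)
      (fun t _ => (hd1 t).differentiableAt.differentiableWithinAt)
    intro t ht
    rw [(hd1 t).deriv]
    exact hψnonneg t (Ioo_subset_Icc_self (by simpa [interior_Icc] using ht))
  have := hmono (left_mem_Icc.2 hT) (right_mem_Icc.2 hT) hT
  have hφ0 : φ 0 = 0 := by simp [hφ]
  have : 0 ≤ φ T := by linarith [hφ0 ▸ this]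
  simp only [hφ] at this
  linarith

lemma taylor_lower_aux {g g' g'' : ℝ → ℝ} {T c : ℝ} (hT : 0 ≤ T)
    (h1 : ∀ t, HasDerivAt g (g' t) t) (h2 : ∀ t, HasDerivAt g' (g'' t) t)
    (hc : ∀ t ∈ Icc (0:ℝ) T, c ≤ g'' t) :
    g 0 + g' 0 * T + c * T ^ 2 / 2 ≤ g T := by
  have := taylor_upper_aux (g := fun t => -g t) (g' := fun t => -g' t)
    (g'' := fun t => -g'' t) (M := -c) hT
    (fun t => (h1 t).neg) (fun t => (h2 t).neg)
    (fun t ht => by simpa using hc t ht)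
  linarith

end Aux1


section NS
variable {E : Type*} [NormedAddCommGroup E] [NormedSpace ℝ E]

lemma line_hasDerivAt {f : E → ℝ} (hf : ContDiff ℝ 2 f) (x v : E) (t : ℝ) :
    HasDerivAt (fun s : ℝ => f (x + s • v)) (fderiv ℝ f (x + t • v) v) t := by
  have hline : HasDerivAt (fun s : ℝ => x + s • v) v t := by
    simpa using ((hasDerivAt_id t).smul_const v).const_add x
  have hfd : HasFDerivAt f (fderiv ℝ f (x + t • v)) (x + t • v) :=
    (hf.differentiable (by norm_num) (x + t • v)).hasFDerivAt
  exact hfd.comp_hasDerivAt t hline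

lemma line_hasDerivAt2 {f : E → ℝ} (hf : ContDiff ℝ 2 f) (x v : E) (t : ℝ) :
    HasDerivAt (fun s : ℝ => fderiv ℝ f (x + s • v) v)
      (iteratedFDeriv ℝ 2 f (x + t • v) ![v, v]) t := by
  have hline : HasDerivAt (fun s : ℝ => x + s • v) v t := by
    simpa using ((hasDerivAt_id t).smul_const v).const_add x
  have hF : ContDiff ℝ 1 (fderiv ℝ f) := hf.fderiv_right (by norm_num)
  have hfd : HasFDerivAt (fderiv ℝ f) (fderiv ℝ (fderiv ℝ f) (x + t • v)) (x + t • v) :=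
    (hF.differentiable (by norm_num) (x + t • v)).hasFDerivAt
  have h1 : HasDerivAt (fun s : ℝ => fderiv ℝ f (x + s • v))
      (fderiv ℝ (fderiv ℝ f) (x + t • v) v) t := by
    exact hfd.comp_hasDerivAt t hline
  have h2 := h1.clm_apply (hasDerivAt_const t v)
  simp only [map_zero, add_zero] at h2
  rw [iteratedFDeriv_two_apply]
  simpa using h2

lemma hess_nonneg {f : E → ℝ}
    (hHess : ∀ x v : E, v ≠ 0 → 0 < iteratedFDeriv ℝ 2 f x ![v, v]) :
    ∀ x v : E, 0 ≤ iteratedFDeriv ℝ 2 f x ![v, v] := by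
  intro x v
  rcases eq_or_ne v 0 with rfl | hv
  · have h0 : ![(0 : E), 0] = (0 : Fin 2 → E) := by
      funext i; fin_cases i <;> rfl
    rw [h0]; simp
  · exact (hHess x v hv).le

lemma line_convex {f : E → ℝ} (hf : ContDiff ℝ 2 f)
    (hpos : ∀ x v : E, 0 ≤ iteratedFDeriv ℝ 2 f x ![v, v]) (x v : E) :
    ConvexOn ℝ univ (fun t : ℝ => f (x + t • v)) := by
  apply convexOn_of_hasDerivWithinAt2_nonneg (f' := fun t => fderiv ℝ f (x + t • v) v)
    (f'' := fun t => iteratedFDeriv ℝ 2 f (x + t • v) ![v, v]) convex_univ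
  · exact fun t _ => (line_hasDerivAt hf x v t).continuousAt.continuousWithinAt
  · exact fun t _ => (line_hasDerivAt hf x v t).hasDerivWithinAt
  · exact fun t _ => (line_hasDerivAt2 hf x v t).hasDerivWithinAt
  · exact fun t _ => hpos _ _

lemma line_seg_le {f : E → ℝ} (hf : ContDiff ℝ 2 f)
    (hpos : ∀ x v : E, 0 ≤ iteratedFDeriv ℝ 2 f x ![v, v]) (x v : E)
    {t : ℝ} (ht : t ∈ Icc (0:ℝ) 1) :
    f (x + t • v) ≤ max (f x) (f (x + v)) := by
  have hconv := line_convex hf hpos x v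
  have h := hconv.2 (mem_univ (0:ℝ)) (mem_univ (1:ℝ))
    (show (0:ℝ) ≤ 1 - t by linarith [ht.2]) ht.1 (by ring)
  simp only [smul_eq_mul, mul_zero, mul_one, zero_add, zero_smul, add_zero, one_smul] at h
  calc f (x + t • v) ≤ (1 - t) * f x + t * f (x + v) := by
        simpa using h
    _ ≤ (1 - t) * max (f x) (f (x + v)) + t * max (f x) (f (x + v)) := by
        gcongr
        · linarith [ht.2]
        · exact le_max_left _ _
        · exact ht.1
        · exact le_max_right _ _
    _ = max (f x) (f (x + v)) := by ring
end NS

section IP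
variable {E : Type*} [NormedAddCommGroup E] [InnerProductSpace ℝ E] [CompleteSpace E]

local notation "⟪" x ", " y "⟫" => @inner ℝ _ _ x y

lemma inner_gradient_eq (f : E → ℝ) (x v : E) :
    ⟪gradient f x, v⟫ = fderiv ℝ f x v := by
  rw [gradient, ← InnerProductSpace.toDual_apply_apply, LinearIsometryEquiv.apply_symm_apply]

lemma descent_step {f : E → ℝ} (hf : ContDiff ℝ 2 f)
    (hpos : ∀ y w : E, 0 ≤ iteratedFDeriv ℝ 2 f y ![w, w])
    {x v : E} {β : ℝ} (hβ : 0 < β)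
    (hup : ∀ y, f y ≤ f x → ∀ w : E, iteratedFDeriv ℝ 2 f y ![w, w] ≤ β * ‖w‖ ^ 2)
    (hv : fderiv ℝ f x v = -‖v‖ ^ 2) :
    f (x + (1 / β) • v) ≤ f x - ‖v‖ ^ 2 / (2 * β) := by
  rcases eq_or_ne v 0 with rfl | hvne
  · simp
  set g : ℝ → ℝ := fun s => f (x + s • v) with hg
  set g1 : ℝ → ℝ := fun s => fderiv ℝ f (x + s • v) v with hg1
  set g2 : ℝ → ℝ := fun s => iteratedFDeriv ℝ 2 f (x + s • v) ![v, v] with hg2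
  have hd1 : ∀ t, HasDerivAt g (g1 t) t := line_hasDerivAt hf x v
  have hd2 : ∀ t, HasDerivAt g1 (g2 t) t := line_hasDerivAt2 hf x v
  have hg0 : g 0 = f x := by simp [hg]
  have hg10 : g1 0 = -‖v‖ ^ 2 := by
    simp only [hg1, zero_smul, add_zero, hv]
  have hG : (0:ℝ) < ‖v‖ ^ 2 := by
    have := norm_pos_iff.2 hvne
    positivity
  have hβ' : (0:ℝ) < 1 / β := by positivity
  have hconv := line_convex hf hpos x v
  set I : Set ℝ := {t | g t ≤ g 0} with hI
  have hIconv : Convex ℝ I := by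
    have := hconv.convex_le (g 0)
    simpa [hI, sep_univ] using this
  have hgcont : Continuous g := by
    rw [continuous_iff_continuousAt]; exact fun t => (hd1 t).continuousAt
  have hIclosed : IsClosed I := isClosed_le hgcont continuous_const
  set K : Set ℝ := I ∩ Icc (0:ℝ) (1 / β) with hK
  have hK0 : (0:ℝ) ∈ K := ⟨by simp [hI], ⟨le_refl _, hβ'.le⟩⟩
  have hKcomp : IsCompact K := isCompact_Icc.inter_left hIclosed
  have hbdd : BddAbove K := hKcomp.bddAbove
  set b : ℝ := sSup K with hb
  have hbK : b ∈ K := hKcomp.sSup_mem ⟨0, hK0⟩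
  have hb0 : 0 ≤ b := le_csSup hbdd hK0
  have hsub : Icc (0:ℝ) b ⊆ I := hIconv.ordConnected.out hK0.1 hbK.1
  have hup' : ∀ t ∈ Icc (0:ℝ) b, g2 t ≤ β * ‖v‖ ^ 2 := by
    intro t ht
    exact hup _ (by rw [← hg0]; exact hsub ht) v
  have htay : g b ≤ g 0 + g1 0 * b + (β * ‖v‖ ^ 2) * b ^ 2 / 2 :=
    taylor_upper_aux hb0 hd1 hd2 hup'
  have hbeq : b = 1 / β := by
    rcases lt_or_eq_of_le hbK.2.2 with hblt | hbeq
    · exfalso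
      have hex : ∃ t, g t < g 0 ∧ t ∈ Ioc b (1 / β) := by
        rcases hb0.lt_or_eq with hbpos | hbz
        · have hβb : b * β < 1 := (lt_div_iff₀ hβ).1 hblt
          have hgb : g b < g 0 := by
            rw [hg10] at htay
            nlinarith [mul_pos hG hbpos]
          have hev0 : ∀ᶠ t in 𝓝 b, g t < g 0 := (hgcont.tendsto b) (Iio_mem_nhds hgb)
          have hev : ∀ᶠ t in 𝓝[>] b, g t < g 0 := mem_nhdsWithin_of_mem_nhds hev0
          have hIoc : ∀ᶠ t in 𝓝[>] b, t ∈ Ioc b (1 / β) :=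
            Ioc_mem_nhdsGT_of_mem ⟨le_refl b, hblt⟩
          exact (hev.and hIoc).exists
        · have hslope := hasDerivAt_iff_tendsto_slope.1 (hd1 0)
          have htend : Filter.Tendsto (slope g 0) (𝓝[>] (0:ℝ)) (𝓝 (g1 0)) :=
            hslope.mono_left (nhdsWithin_mono 0 (fun t ht => ne_of_gt ht))
          have hevs : ∀ᶠ t in 𝓝[>] (0:ℝ), slope g 0 t < 0 :=
            htend (Iio_mem_nhds (by rw [hg10]; linarith))
          have hIoc : ∀ᶠ t in 𝓝[>] (0:ℝ), t ∈ Ioc (0:ℝ) (1 / β) :=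
            Ioc_mem_nhdsGT_of_mem ⟨le_refl 0, hβ'⟩
          obtain ⟨t, hts, htIoc⟩ := (hevs.and hIoc).exists
          refine ⟨t, ?_, by rw [← hbz]; exact htIoc⟩
          have hslope_eq : slope g 0 t = (g t - g 0) / t := by
            rw [slope_def_field]; ring_nf
          rw [hslope_eq] at hts
          rcases div_neg_iff.1 hts with ⟨h1, h2⟩ | ⟨h1, h2⟩
          · linarith [htIoc.1]
          · linarith
      obtain ⟨t, hgt, htIoc⟩ := hex
      have htK : t ∈ K := ⟨hgt.le, ⟨hb0.trans htIoc.1.le, htIoc.2⟩⟩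
      have := le_csSup hbdd htK
      linarith [htIoc.1]
    · exact hbeq
  rw [hbeq, hg10] at htay
  have hβne : β ≠ 0 := ne_of_gt hβ
  have hkey : g 0 + -‖v‖ ^ 2 * (1 / β) + β * ‖v‖ ^ 2 * (1 / β) ^ 2 / 2
      = g 0 - ‖v‖ ^ 2 / (2 * β) := by
    field_simp
    ring
  rw [hkey] at htay
  rw [hg0] at htay
  exact htay
lemma lower_taylor_pair {f : E → ℝ} (hf : ContDiff ℝ 2 f)
    (hpos : ∀ y w : E, 0 ≤ iteratedFDeriv ℝ 2 f y ![w, w])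
    {c a : ℝ} {p q : E} (hp : f p ≤ c) (hq : f q ≤ c)
    (hlow : ∀ y, f y ≤ c → ∀ w : E, a * ‖w‖ ^ 2 ≤ iteratedFDeriv ℝ 2 f y ![w, w]) :
    f p + ⟪gradient f p, q - p⟫ + a * ‖q - p‖ ^ 2 / 2 ≤ f q := by
  set v : E := q - p with hv
  set g : ℝ → ℝ := fun s => f (p + s • v) with hg
  set g1 : ℝ → ℝ := fun s => fderiv ℝ f (p + s • v) v with hg1
  set g2 : ℝ → ℝ := fun s => iteratedFDeriv ℝ 2 f (p + s • v) ![v, v] with hg2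
  have hd1 : ∀ t, HasDerivAt g (g1 t) t := line_hasDerivAt hf p v
  have hd2 : ∀ t, HasDerivAt g1 (g2 t) t := line_hasDerivAt2 hf p v
  have hpv : p + v = q := by rw [hv]; abel
  have hlow' : ∀ t ∈ Icc (0:ℝ) 1, a * ‖v‖ ^ 2 ≤ g2 t := by
    intro t ht
    refine hlow _ ?_ v
    calc f (p + t • v) ≤ max (f p) (f (p + v)) := line_seg_le hf hpos p v ht
      _ ≤ c := max_le hp (by rw [hpv]; exact hq)
  have htay := taylor_lower_aux zero_le_one hd1 hd2 hlow'
  have hg0 : g 0 = f p := by simp [hg]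
  have hgone : g 1 = f q := by rw [hg]; simp [hpv]
  have hg10 : g1 0 = ⟪gradient f p, v⟫ := by
    rw [hg1]
    simp only [zero_smul, add_zero]
    exact (inner_gradient_eq f p v).symm
  rw [hg0, hgone, hg10] at htay
  have hvq : ‖v‖ = ‖q - p‖ := by rw [hv]
  rw [hvq] at htay
  linarith

end IP


section Blk

variable {d : ℕ} {m : Fin d → ℕ}

local notation "E" => PiLp 2 (fun i : Fin d => EuclideanSpace ℝ (Fin (m i)))
local notation "⟪" x ", " y "⟫" => @inner ℝ _ _ x y


noncomputable def blkSingle (j : Fin d) (w : EuclideanSpace ℝ (Fin (m j))) : E :=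
  (WithLp.equiv 2 _).symm (Pi.single j w)

lemma blkSingle_apply (j : Fin d) (w : EuclideanSpace ℝ (Fin (m j))) (i : Fin d) :
    blkSingle j w i = Pi.single (M := fun i => EuclideanSpace ℝ (Fin (m i))) j w i := by
  rfl

lemma pilp_norm_sq (u : E) : ‖u‖ ^ 2 = ∑ i, ‖u i‖ ^ 2 :=
  PiLp.norm_sq_eq_of_L2 _ u

lemma pilp_inner_single (u : E) (j : Fin d) (w : EuclideanSpace ℝ (Fin (m j))) :
    ⟪u, blkSingle j w⟫ = ⟪u j, w⟫ := by
  rw [PiLp.inner_apply]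
  rw [Finset.sum_eq_single j]
  · rw [blkSingle_apply, Pi.single_eq_same]
  · intro i _ hij
    rw [blkSingle_apply, Pi.single_eq_of_ne hij, inner_zero_right]
  · intro h; exact absurd (Finset.mem_univ j) h

lemma pilp_norm_single (j : Fin d) (w : EuclideanSpace ℝ (Fin (m j))) :
    ‖blkSingle j w‖ ^ 2 = ‖w‖ ^ 2 := by
  rw [pilp_norm_sq, Finset.sum_eq_single j]
  · rw [blkSingle_apply, Pi.single_eq_same]
  · intro i _ hij
    rw [blkSingle_apply, Pi.single_eq_of_ne hij, norm_zero]
    simp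
  · intro h; exact absurd (Finset.mem_univ j) h

lemma pilp_update_eq (x : E) (j : Fin d) (u : EuclideanSpace ℝ (Fin (m j))) :
    x + blkSingle j u = Function.update x j (x j + u) := by
  funext i
  have hadd : (x + blkSingle j u) i = x i + blkSingle j u i := rfl
  rw [Pi.add_apply]
  by_cases hij : i = j
  · subst hij
    rw [blkSingle_apply, Pi.single_eq_same, Function.update_self]
  · rw [blkSingle_apply, Pi.single_eq_of_ne hij, Function.update_of_ne hij, add_zero]

noncomputable def blkCLM (j : Fin d) : EuclideanSpace ℝ (Fin (m j)) →L[ℝ] E :=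
  LinearMap.toContinuousLinearMap
    { toFun := fun w => blkSingle j w
      map_add' := fun a b => by
        apply PiLp.ext; intro i
        show blkSingle j (a + b) i = blkSingle j a i + blkSingle j b i
        simp only [blkSingle_apply]
        by_cases hij : i = j
        · subst hij; rw [Pi.single_eq_same, Pi.single_eq_same, Pi.single_eq_same]
        · rw [Pi.single_eq_of_ne hij, Pi.single_eq_of_ne hij, Pi.single_eq_of_ne hij, add_zero]
      map_smul' := fun c a => by
        apply PiLp.ext; intro i
        show blkSingle j (c • a) i = c • (blkSingle j a i)
        simp only [blkSingle_apply]
        by_cases hij : i = j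
        · subst hij; rw [Pi.single_eq_same, Pi.single_eq_same]
        · rw [Pi.single_eq_of_ne hij, Pi.single_eq_of_ne hij, smul_zero] }

lemma blkCLM_apply (j : Fin d) (w : EuclideanSpace ℝ (Fin (m j))) :
    blkCLM j w = blkSingle j w := rfl

lemma update_as_affine (x : E) (j : Fin d) (w : EuclideanSpace ℝ (Fin (m j))) :
    Function.update x j w = x + blkSingle j (w - x j) := by
  have h : x j + (w - x j) = w := by abel
  rw [pilp_update_eq, h]

lemma block_min_grad_zero {f : (PiLp 2 fun i : Fin d => EuclideanSpace ℝ (Fin (m i))) → ℝ}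
    (hf : ContDiff ℝ 2 f) (x : E) (j : Fin d)
    (y : EuclideanSpace ℝ (Fin (m j)))
    (hmin : ∀ z, f (WithLp.toLp 2 (Function.update x j y)) ≤ f (WithLp.toLp 2 (Function.update x j z))) :
    gradient f (WithLp.toLp 2 (Function.update x j y)) j = 0 := by
  set ψ : EuclideanSpace ℝ (Fin (m j)) → E := fun w => x + blkSingle j (w - x j) with hψdef
  have hψupd : ∀ w, WithLp.toLp 2 (Function.update x j w) = ψ w :=
    fun w => congrArg (WithLp.toLp 2) (update_as_affine x j w)
  set X : E := WithLp.toLp 2 (Function.update x j y) with hX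
  set φ : EuclideanSpace ℝ (Fin (m j)) → ℝ := fun w => f (ψ w) with hφ
  have hψ : HasFDerivAt ψ (blkCLM j) y := by
    have h1 : HasFDerivAt (fun w : EuclideanSpace ℝ (Fin (m j)) => w - x j)
        (ContinuousLinearMap.id ℝ _) y := (hasFDerivAt_id y).sub_const (x j)
    have h2 := ((blkCLM (m := m) j).hasFDerivAt.comp y h1).const_add x
    rw [ContinuousLinearMap.comp_id] at h2
    simp only [Function.comp_apply] at h2
    have heq : (fun w : EuclideanSpace ℝ (Fin (m j)) => x + blkCLM j (w - x j)) = ψ := by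
      funext w
      rw [blkCLM_apply]
    rw [heq] at h2
    exact h2
  have hXψ : X = ψ y := by rw [hX, hψupd y]
  have hfX : HasFDerivAt f (fderiv ℝ f X) (ψ y) := by
    rw [← hXψ]
    exact (hf.differentiable (by norm_num) X).hasFDerivAt
  have hφd : HasFDerivAt φ ((fderiv ℝ f X).comp (blkCLM j)) y := hfX.comp y hψ
  have hlocmin : IsLocalMin φ y := by
    apply Filter.Eventually.of_forall
    intro w
    have h1 := hmin w
    rw [hψupd w] at h1
    show f (ψ y) ≤ f (ψ w)
    rw [← hXψ]
    exact h1
  have hzero : (fderiv ℝ f X).comp (blkCLM j) = 0 :=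
    hlocmin.hasFDerivAt_eq_zero hφd
  have hzero' : ∀ w, fderiv ℝ f X (blkSingle j w) = 0 := by
    intro w
    have := DFunLike.congr_fun hzero w
    simpa [blkCLM_apply] using this
  have hinner : ∀ w, ⟪(gradient f X) j, w⟫ = 0 := by
    intro w
    rw [← pilp_inner_single, inner_gradient_eq, hzero' w]
  have := hinner ((gradient f X) j)
  rwa [inner_self_eq_zero] at this

end Blk

local notation "⟪" x ", " y "⟫ₑ" => @inner ℝ _ _ x y

set_option maxHeartbeats 1000000 in
/-- Geometric convergence of iterates along the partial-minimization
algorithm: for `k ≥ 1`,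
`‖x_k − x*‖² ≤ (‖∇f(x₀)‖²/(α(t_k)α(t₀)))(1 − 1/(dκ₀)) ∏_{i=1}^{k−1}(1 − 1/((d−1)κᵢ))`. -/
theorem partial_min_geometric_convergence_iterates {d : ℕ} (hd : 2 ≤ d) {m : Fin d → ℕ}
    (hm : ∀ i, 1 ≤ m i)
    (f : PiLp 2 (fun i : Fin d => EuclideanSpace ℝ (Fin (m i))) → ℝ)
    (hf : ContDiff ℝ 2 f)
    (hHess : ∀ x v : PiLp 2 (fun i : Fin d => EuclideanSpace ℝ (Fin (m i))), v ≠ 0 →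
      0 < iteratedFDeriv ℝ 2 f x ![v, v])
    (xstar : PiLp 2 (fun i : Fin d => EuclideanSpace ℝ (Fin (m i))))
    (hmin : ∀ y, f xstar ≤ f y)
    (huniq : ∀ y, (∀ z, f y ≤ f z) → y = xstar)
    (x : ℕ → PiLp 2 (fun i : Fin d => EuclideanSpace ℝ (Fin (m i))))
    (halg : ∀ k : ℕ, ∃ j : Fin d,
      (∀ l : Fin d, ‖gradient f (x k) l‖ ≤ ‖gradient f (x k) j‖) ∧
      ∃ y : EuclideanSpace ℝ (Fin (m j)),
        (∀ z : EuclideanSpace ℝ (Fin (m j)),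
          f (WithLp.toLp 2 (Function.update (x k) j y)) ≤ f (WithLp.toLp 2 (Function.update (x k) j z))) ∧
        x (k + 1) = Function.update (x k) j y)
    (α β : ℕ → ℝ) (hα : ∀ k, 0 < α k) (hαβ : ∀ k, α k ≤ β k)
    (hEig : ∀ k : ℕ, ∀ y, f y ≤ f (x k) →
      ∀ v : PiLp 2 (fun i : Fin d => EuclideanSpace ℝ (Fin (m i))),
      α k * ‖v‖ ^ 2 ≤ iteratedFDeriv ℝ 2 f y ![v, v] ∧
      iteratedFDeriv ℝ 2 f y ![v, v] ≤ β k * ‖v‖ ^ 2) :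
    ∀ k : ℕ, 1 ≤ k →
      ‖x k - xstar‖ ^ 2 ≤
        ‖gradient f (x 0)‖ ^ 2 / (α k * α 0) * (1 - 1 / (d * (β 0 / α 0))) *
          ∏ i ∈ Finset.Icc 1 (k - 1), (1 - 1 / ((d - 1) * (β i / α i))) := by
  classical
  have hpos : ∀ y v : PiLp 2 (fun i : Fin d => EuclideanSpace ℝ (Fin (m i))),
      0 ≤ iteratedFDeriv ℝ 2 f y ![v, v] := hess_nonneg hHess
  choose j hjmax y hyblk hupd using halg
  set G : ℕ → PiLp 2 (fun i : Fin d => EuclideanSpace ℝ (Fin (m i))) :=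
    fun k => gradient f (x k) with hG
  set e : ℕ → ℝ := fun k => f (x k) - f xstar with he
  have hβpos : ∀ k, 0 < β k := fun k => lt_of_lt_of_le (hα k) (hαβ k)
  have he_nonneg : ∀ k, 0 ≤ e k := fun k => sub_nonneg.2 (hmin _)
  have hgradstar : gradient f xstar = 0 := by
    have hloc : IsLocalMin f xstar := Filter.Eventually.of_forall hmin
    have hfd := (hf.differentiable (by norm_num) xstar).hasFDerivAt
    have h0 : fderiv ℝ f xstar = 0 := hloc.hasFDerivAt_eq_zero hfd
    have hv : ∀ v, ⟪gradient f xstar, v⟫ₑ = (0:ℝ) := by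
      intro v; rw [inner_gradient_eq, h0]; rfl
    have := hv (gradient f xstar)
    rwa [inner_self_eq_zero] at this
  -- one-step descent
  have hdec : ∀ k, f (x (k+1)) ≤ f (x k) - ‖(G k) (j k)‖ ^ 2 / (2 * β k) := by
    intro k
    set g : EuclideanSpace ℝ (Fin (m (j k))) := (G k) (j k) with hg
    set v := blkSingle (j k) (-g) with hv
    have hnv : ‖v‖ ^ 2 = ‖g‖ ^ 2 := by rw [hv, pilp_norm_single, norm_neg]
    have hfder : fderiv ℝ f (x k) v = -‖v‖ ^ 2 := by
      rw [← inner_gradient_eq]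
      have h1 : ⟪gradient f (x k), v⟫ₑ = ⟪gradient f (x k) (j k), -g⟫ₑ :=
        pilp_inner_single (gradient f (x k)) (j k) (-g)
      have hGk : gradient f (x k) (j k) = g := rfl
      rw [h1, hGk, inner_neg_right, real_inner_self_eq_norm_sq, hnv]
    have hstep := descent_step hf hpos (hβpos k)
      (fun y' hy' w => (hEig k y' hy' w).2) hfder
    have hupdpt : x k + (1 / β k) • v
        = Function.update (x k) (j k) ((x k) (j k) + (1 / β k) • (-g)) := by
      have hsm : (1 / β k) • v = blkSingle (j k) ((1 / β k) • (-g)) := by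
        rw [hv, ← blkCLM_apply, ← map_smul, blkCLM_apply]
      rw [← WithLp.ofLp_smul, hsm, pilp_update_eq]
    have hle : f (x (k+1)) ≤ f (x k + (1 / β k) • v) := by
      rw [show x (k+1) = WithLp.toLp 2 (Function.update (x k) (j k) (y k)) from
          congrArg (WithLp.toLp 2) (hupd k),
        show x k + (1 / β k) • v = WithLp.toLp 2 (Function.update (x k) (j k)
          ((x k) (j k) + (1 / β k) • (-g))) from congrArg (WithLp.toLp 2) hupdpt]
      exact hyblk k _
    rw [hnv] at hstep
    calc f (x (k+1)) ≤ f (x k + (1 / β k) • v) := hle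
      _ ≤ f (x k) - ‖g‖ ^ 2 / (2 * β k) := hstep
  -- Polyak–Łojasiewicz-type inequality
  have hPL : ∀ k, 2 * α k * e k ≤ ‖G k‖ ^ 2 := by
    intro k
    have h := lower_taylor_pair hf hpos (le_refl (f (x k))) (hmin (x k))
      (fun y' hy' w => (hEig k y' hy' w).1)
    have hGk : gradient f (x k) = G k := rfl
    rw [hGk] at h
    have hCS : -(‖G k‖ * ‖xstar - x k‖) ≤ ⟪G k, xstar - x k⟫ₑ := by
      have habs := abs_real_inner_le_norm (G k) (xstar - x k)
      have := (abs_le.1 habs).1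
      linarith
    have hek : e k = f (x k) - f xstar := rfl
    nlinarith [sq_nonneg (‖G k‖ - α k * ‖xstar - x k‖), hα k,
      norm_nonneg (G k), norm_nonneg (xstar - x k), he_nonneg k]
  -- strong convexity bound on the iterate distance
  have hSC : ∀ k, α k * ‖x k - xstar‖ ^ 2 ≤ 2 * e k := by
    intro k
    have h := lower_taylor_pair hf hpos (hmin (x k)) (le_refl (f (x k)))
      (fun y' hy' w => (hEig k y' hy' w).1)
    rw [hgradstar, inner_zero_left] at h
    have hek : e k = f (x k) - f xstar := rfl
    linarith
  -- gradient block chosen at step k vanishes at step k+1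
  have hbz : ∀ k, (G (k+1)) (j k) = 0 := by
    intro k
    have h := block_min_grad_zero hf (x k) (j k) (y k) (hyblk k)
    show gradient f (x (k+1)) (j k) = 0
    rw [show x (k+1) = WithLp.toLp 2 (Function.update (x k) (j k) (y k)) from
      congrArg (WithLp.toLp 2) (hupd k)]
    exact h
  have hsum : ∀ k, ‖G k‖ ^ 2 = ∑ i, ‖(G k) i‖ ^ 2 := fun k => pilp_norm_sq (G k)
  have hmax0 : ‖G 0‖ ^ 2 ≤ (d : ℝ) * ‖(G 0) (j 0)‖ ^ 2 := by
    rw [hsum 0]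
    calc ∑ i, ‖(G 0) i‖ ^ 2
        ≤ (Finset.univ : Finset (Fin d)).card • ‖(G 0) (j 0)‖ ^ 2 :=
          Finset.sum_le_card_nsmul _ _ _
            (fun i _ => pow_le_pow_left₀ (norm_nonneg _) (hjmax 0 i) 2)
      _ = (d : ℝ) * ‖(G 0) (j 0)‖ ^ 2 := by
          rw [Finset.card_univ, Fintype.card_fin, nsmul_eq_mul]
  have hmax : ∀ k, 1 ≤ k → ‖G k‖ ^ 2 ≤ ((d : ℝ) - 1) * ‖(G k) (j k)‖ ^ 2 := by
    intro k hk
    obtain ⟨k', rfl⟩ : ∃ k', k = k' + 1 := ⟨k - 1, by omega⟩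
    rw [hsum]
    have hzero : ‖(G (k'+1)) (j k')‖ ^ 2 = 0 := by rw [hbz k']; simp
    have hsplit : ∑ i, ‖(G (k'+1)) i‖ ^ 2
        = ∑ i ∈ Finset.univ.erase (j k'), ‖(G (k'+1)) i‖ ^ 2 := by
      rw [← Finset.sum_erase_add _ _ (Finset.mem_univ (j k')), hzero, add_zero]
    rw [hsplit]
    calc ∑ i ∈ Finset.univ.erase (j k'), ‖(G (k'+1)) i‖ ^ 2
        ≤ (Finset.univ.erase (j k')).card • ‖(G (k'+1)) (j (k'+1))‖ ^ 2 :=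
          Finset.sum_le_card_nsmul _ _ _
            (fun i _ => pow_le_pow_left₀ (norm_nonneg _) (hjmax (k'+1) i) 2)
      _ = ((d : ℝ) - 1) * ‖(G (k'+1)) (j (k'+1))‖ ^ 2 := by
          rw [Finset.card_erase_of_mem (Finset.mem_univ (j k')), Finset.card_univ,
            Fintype.card_fin, nsmul_eq_mul, Nat.cast_sub (by omega : 1 ≤ d), Nat.cast_one]
  have hd1 : (1:ℝ) ≤ (d:ℝ) - 1 := by
    have h2 : (2:ℝ) ≤ (d:ℝ) := by exact_mod_cast hd
    linarith
  have hdR : (1:ℝ) ≤ (d:ℝ) := by linarith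
  have key : ∀ (c : ℝ), 1 ≤ c → ∀ k, ‖G k‖ ^ 2 ≤ c * ‖(G k) (j k)‖ ^ 2 →
      e (k+1) ≤ (1 - 1/(c * (β k / α k))) * e k := by
    intro c hc k hmaxk
    have hc0 : (0:ℝ) < c := lt_of_lt_of_le one_pos hc
    have hβk := hβpos k
    have hαk := hα k
    have h1 : e (k+1) ≤ e k - ‖(G k) (j k)‖ ^ 2 / (2 * β k) := by
      have h := hdec k
      simp only [he]
      linarith
    have h2 : 2 * α k * e k ≤ c * ‖(G k) (j k)‖ ^ 2 := le_trans (hPL k) hmaxk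
    have heq : 1/(c * (β k / α k)) = α k / (c * β k) := by
      rw [mul_div_assoc', one_div_div]
    have h3 : α k * e k / (c * β k) ≤ ‖(G k) (j k)‖ ^ 2 / (2 * β k) := by
      rw [div_le_div_iff₀ (by positivity) (by positivity)]
      nlinarith
    have h4 : (1 - α k / (c * β k)) * e k = e k - α k * e k / (c * β k) := by ring
    rw [heq, h4]
    linarith
  have hfac : ∀ (c : ℝ), 1 ≤ c → ∀ i, 0 ≤ 1 - 1/(c * (β i / α i)) := by
    intro c hc i
    have hκ : 1 ≤ β i / α i := (one_le_div (hα i)).2 (hαβ i)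
    have h1 : 1 ≤ c * (β i / α i) := by nlinarith
    have h2 : 1/(c * (β i / α i)) ≤ 1 := by
      rw [div_le_one (by linarith)]
      linarith
    linarith
  set E0 : ℝ := ‖G 0‖ ^ 2 / (2 * α 0) with hE0
  have he0 : e 0 ≤ E0 := by
    rw [hE0, le_div_iff₀ (by have := hα 0; linarith)]
    have := hPL 0
    nlinarith
  set c0 : ℝ := 1 - 1/((d:ℝ) * (β 0 / α 0)) with hc0def
  have hc0nn : (0:ℝ) ≤ c0 := hfac _ hdR 0
  have hE0nn : (0:ℝ) ≤ E0 := by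
    rw [hE0]
    apply div_nonneg (by positivity)
    have := hα 0
    linarith
  have hmain : ∀ k, 1 ≤ k →
      e k ≤ E0 * c0 * ∏ i ∈ Finset.Icc 1 (k-1), (1 - 1/(((d:ℝ) - 1) * (β i / α i))) := by
    intro k hk
    induction k with
    | zero => omega
    | succ n ih =>
      rcases Nat.lt_or_ge 1 (n + 1) with h1 | h1
      · have hn : 1 ≤ n := by omega
        have ihh := ih hn
        have hstep := key ((d:ℝ) - 1) hd1 n (hmax n hn)
        have hrk : 0 ≤ 1 - 1/(((d:ℝ)-1) * (β n / α n)) := hfac _ hd1 n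
        have hprod : (∏ i ∈ Finset.Icc 1 ((n+1)-1), (1 - 1/(((d:ℝ)-1) * (β i / α i))))
            = (∏ i ∈ Finset.Icc 1 (n-1), (1 - 1/(((d:ℝ)-1) * (β i / α i))))
              * (1 - 1/(((d:ℝ)-1) * (β n / α n))) := by
          have h2 : (n+1) - 1 = (n-1) + 1 := by omega
          have h3 : (n-1) + 1 = n := by omega
          rw [h2, Finset.prod_Icc_succ_top (by omega : 1 ≤ (n-1)+1), h3]
        calc e (n+1) ≤ (1 - 1/(((d:ℝ)-1) * (β n / α n))) * e n := hstep
          _ ≤ (1 - 1/(((d:ℝ)-1) * (β n / α n)))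
              * (E0 * c0 * ∏ i ∈ Finset.Icc 1 (n-1), (1 - 1/(((d:ℝ)-1) * (β i / α i)))) :=
            mul_le_mul_of_nonneg_left ihh hrk
          _ = E0 * c0 * ∏ i ∈ Finset.Icc 1 ((n+1)-1), (1 - 1/(((d:ℝ)-1) * (β i / α i))) := by
            rw [hprod]; ring
      · have hn : n = 0 := by omega
        subst hn
        rw [show (1:ℕ) - 1 = 0 from rfl,
          show Finset.Icc 1 0 = (∅ : Finset ℕ) from Finset.Icc_eq_empty (by omega),
          Finset.prod_empty, mul_one]
        have hk1 := key (d:ℝ) hdR 0 hmax0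
        calc e 1 ≤ c0 * e 0 := by rw [hc0def]; exact hk1
          _ ≤ c0 * E0 := mul_le_mul_of_nonneg_left he0 hc0nn
          _ = E0 * c0 := mul_comm _ _
  intro k hk
  have h1 := hSC k
  have h2 := hmain k hk
  set P : ℝ := ∏ i ∈ Finset.Icc 1 (k-1), (1 - 1/(((d:ℝ) - 1) * (β i / α i))) with hP
  have hPnn : (0:ℝ) ≤ P := Finset.prod_nonneg (fun i _ => hfac _ hd1 i)
  have hαk := hα k
  have hα0 := hα 0
  have h4 : ‖x k - xstar‖ ^ 2 ≤ 2 * (E0 * c0 * P) / α k := by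
    rw [le_div_iff₀ hαk]
    nlinarith [mul_le_mul_of_nonneg_left h2 (by norm_num : (0:ℝ) ≤ 2)]
  have h5 : 2 * (E0 * c0 * P) / α k = ‖G 0‖ ^ 2 / (α k * α 0) * c0 * P := by
    rw [hE0]
    field_simp
  rw [← h5]
  exact h4
end

section
/- Let B = [b_{i₁,…,i_d}] ∈ ℝ₊^{m₁×⋯×m_d} (d ≥ 2, each m_j ≥ 2) be a nonnegative tensor with no zero slice, and let s_k ∈ ℝ^{m_k}, k ∈ [d], be positive vectors satisfying the compatibility condition. Then the restriction of f̂ to the subspace V₀(s₁,…,s_d)^⊥ (the orthogonal complement of V₀(s₁,…,s_d) inside U(s₁,…,s_d)) is strictly convex: its Hessian, as a quadratic form restricted to V₀(s₁,…,s_d)^⊥, is positive definite at every point of V₀(s₁,…,s_d)^⊥. -/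
section

variable {d : ℕ} {m : Fin d → ℕ}

/-- The subspace `U(s₁,…,s_d) = {x : sₖᵀxₖ = 0 for all k}` of
`ℝ^{m₁} × ⋯ × ℝ^{m_d}`, realized inside `EuclideanSpace ℝ ((k : Fin d) × Fin (m k))`. -/
noncomputable def Usub (s : (k : Fin d) → Fin (m k) → ℝ) :
    Submodule ℝ (EuclideanSpace ℝ ((k : Fin d) × Fin (m k))) where
  carrier := {x | ∀ k : Fin d, ∑ i : Fin (m k), s k i * x ⟨k, i⟩ = 0}
  add_mem' := by
    intro a b ha hb k
    simp only [PiLp.add_apply, mul_add, Finset.sum_add_distrib, ha k, hb k, add_zero]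
  zero_mem' := by intro k; simp
  smul_mem' := by
    intro c a ha k
    have : ∀ i : Fin (m k), s k i * (c • a) ⟨k, i⟩ = c * (s k i * a ⟨k, i⟩) := by
      intro i; simp [PiLp.smul_apply, smul_eq_mul]; ring
    simp only [this, ← Finset.mul_sum, ha k, mul_zero]

/-- The subspace `V(s₁,…,s_d) = {x : x₁(i₁) + ⋯ + x_d(i_d) = 0 whenever B i > 0}`. -/
noncomputable def Vsub (B : ((j : Fin d) → Fin (m j)) → ℝ) :
    Submodule ℝ (EuclideanSpace ℝ ((k : Fin d) × Fin (m k))) where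
  carrier := {x | ∀ i : (j : Fin d) → Fin (m j), 0 < B i → ∑ k : Fin d, x ⟨k, i k⟩ = 0}
  add_mem' := by
    intro a b ha hb i hi
    simp only [PiLp.add_apply, Finset.sum_add_distrib, ha i hi, hb i hi, add_zero]
  zero_mem' := by intro i _; simp
  smul_mem' := by
    intro c a ha i hi
    have : ∀ k : Fin d, (c • a) ⟨k, i k⟩ = c * a ⟨k, i k⟩ := by
      intro k; simp [PiLp.smul_apply, smul_eq_mul]
    simp only [this, ← Finset.mul_sum, ha i hi, mul_zero]

/-- The orthogonal complement `V₀(s₁,…,s_d)^⊥` of `V₀ = V ∩ U` inside `U`. -/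
noncomputable def V0perp (B : ((j : Fin d) → Fin (m j)) → ℝ)
    (s : (k : Fin d) → Fin (m k) → ℝ) :
    Submodule ℝ (EuclideanSpace ℝ ((k : Fin d) × Fin (m k))) :=
  Usub s ⊓ (Vsub B ⊓ Usub s)ᗮ


variable {d : ℕ} {m : Fin d → ℕ}

noncomputable def Lfun (i : (j : Fin d) → Fin (m j)) :
    EuclideanSpace ℝ ((k : Fin d) × Fin (m k)) →L[ℝ] ℝ :=
  ∑ k : Fin d, EuclideanSpace.proj (⟨k, i k⟩ : (k : Fin d) × Fin (m k))

lemma Lfun_apply (i : (j : Fin d) → Fin (m j))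
    (y : EuclideanSpace ℝ ((k : Fin d) × Fin (m k))) :
    Lfun i y = ∑ k : Fin d, y ⟨k, i k⟩ := by
  simp [Lfun, ContinuousLinearMap.sum_apply]

lemma hasFDerivAt_fhat (B : ((j : Fin d) → Fin (m j)) → ℝ)
    (y : EuclideanSpace ℝ ((k : Fin d) × Fin (m k))) :
    HasFDerivAt (fun z : EuclideanSpace ℝ ((k : Fin d) × Fin (m k)) =>
        ∑ i : (j : Fin d) → Fin (m j), B i * Real.exp (Lfun i z))
      (∑ i : (j : Fin d) → Fin (m j), (B i * Real.exp (Lfun i y)) • Lfun i) y := by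
  apply HasFDerivAt.fun_sum
  intro i _
  have h1 : HasFDerivAt (fun z => Real.exp (Lfun i z))
      (Real.exp (Lfun i y) • Lfun i) y :=
    (Real.hasDerivAt_exp (Lfun i y)).comp_hasFDerivAt y (Lfun i).hasFDerivAt
  have h2 := h1.const_mul (B i)
  simpa [smul_smul] using h2

lemma fderiv_fhat (B : ((j : Fin d) → Fin (m j)) → ℝ) :
    (fderiv ℝ (fun z : EuclideanSpace ℝ ((k : Fin d) × Fin (m k)) =>
        ∑ i : (j : Fin d) → Fin (m j), B i * Real.exp (Lfun i z)))
    = fun y => ∑ i : (j : Fin d) → Fin (m j), (B i * Real.exp (Lfun i y)) • Lfun i := by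
  funext y
  exact (hasFDerivAt_fhat B y).fderiv

lemma second_deriv_fhat (B : ((j : Fin d) → Fin (m j)) → ℝ)
    (x v : EuclideanSpace ℝ ((k : Fin d) × Fin (m k))) :
    iteratedFDeriv ℝ 2
        (fun y : EuclideanSpace ℝ ((k : Fin d) × Fin (m k)) =>
          ∑ i : (j : Fin d) → Fin (m j), B i * Real.exp (∑ k : Fin d, y ⟨k, i k⟩))
        x ![v, v]
      = ∑ i : (j : Fin d) → Fin (m j),
          B i * Real.exp (Lfun i x) * (Lfun i v) * (Lfun i v) := by
  have hfun : (fun y : EuclideanSpace ℝ ((k : Fin d) × Fin (m k)) =>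
          ∑ i : (j : Fin d) → Fin (m j), B i * Real.exp (∑ k : Fin d, y ⟨k, i k⟩))
      = fun y => ∑ i : (j : Fin d) → Fin (m j), B i * Real.exp (Lfun i y) := by
    funext y; simp [Lfun_apply]
  rw [hfun, iteratedFDeriv_two_apply, fderiv_fhat]
  have hD : HasFDerivAt
      (fun y : EuclideanSpace ℝ ((k : Fin d) × Fin (m k)) =>
        ∑ i : (j : Fin d) → Fin (m j), (B i * Real.exp (Lfun i y)) • Lfun i)
      (∑ i : (j : Fin d) → Fin (m j),
        ((B i * Real.exp (Lfun i x)) • Lfun i).smulRight (Lfun i)) x := by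
    apply HasFDerivAt.fun_sum
    intro i _
    have h1 : HasFDerivAt (fun z => B i * Real.exp (Lfun i z))
        ((B i * Real.exp (Lfun i x)) • Lfun i) x := by
      have := ((Real.hasDerivAt_exp (Lfun i x)).comp_hasFDerivAt x
        (Lfun i).hasFDerivAt).const_mul (B i)
      simpa [smul_smul] using this
    exact h1.smul_const (Lfun i)
  rw [hD.fderiv]
  simp [ContinuousLinearMap.sum_apply, ContinuousLinearMap.smulRight_apply,
    ContinuousLinearMap.smul_apply, smul_eq_mul]

/-- Lemma 3.4 of the paper. The restriction of
`f̂(x) = ∑_i B i · exp(∑_k x(k, i k))` to `V₀(s₁,…,s_d)^⊥` is strictly convex: its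
Hessian, as a quadratic form restricted to `V₀(s₁,…,s_d)^⊥`, is positive definite at
every point of `V₀(s₁,…,s_d)^⊥`. -/
theorem restriction_strictly_convex {d : ℕ} {m : Fin d → ℕ} (hd : 2 ≤ d)
    (hm : ∀ j, 2 ≤ m j)
    (B : ((j : Fin d) → Fin (m j)) → ℝ)
    (hB : ∀ i, 0 ≤ B i)
    (hslice : ∀ (k : Fin d) (ik : Fin (m k)),
      ∃ i : (j : Fin d) → Fin (m j), i k = ik ∧ B i ≠ 0)
    (s : (k : Fin d) → Fin (m k) → ℝ) (hs : ∀ k i, 0 < s k i)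
    (hcompat : ∀ k l : Fin d, ∑ i, s k i = ∑ i, s l i) :
    ∀ x ∈ V0perp B s, ∀ v ∈ V0perp B s, v ≠ 0 →
      0 < iteratedFDeriv ℝ 2
        (fun y : EuclideanSpace ℝ ((k : Fin d) × Fin (m k)) =>
          ∑ i : (j : Fin d) → Fin (m j), B i * Real.exp (∑ k : Fin d, y ⟨k, i k⟩))
        x ![v, v] := by
  classical
  intro x hx v hv hvne
  obtain ⟨hvU, hvperp⟩ := hv
  rw [second_deriv_fhat B x v]
  -- v is not in Vsub B
  have hvnotV : ¬ v ∈ Vsub B := by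
    intro hvV
    have hmem : v ∈ Vsub B ⊓ Usub s := ⟨hvV, hvU⟩
    have := (Submodule.mem_orthogonal _ v).mp hvperp v hmem
    exact hvne (inner_self_eq_zero.mp this)
  have hVsub : v ∈ Vsub B ↔ ∀ i : (j : Fin d) → Fin (m j), 0 < B i →
      ∑ k : Fin d, v ⟨k, i k⟩ = 0 := Iff.rfl
  rw [hVsub] at hvnotV
  push_neg at hvnotV
  obtain ⟨i₀, hBi₀, hLi₀⟩ := hvnotV
  apply Finset.sum_pos'
  · intro i _
    have : B i * Real.exp (Lfun i x) * Lfun i v * Lfun i v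
        = B i * Real.exp (Lfun i x) * (Lfun i v * Lfun i v) := by ring
    rw [this]
    exact mul_nonneg (mul_nonneg (hB i) (Real.exp_nonneg _)) (mul_self_nonneg _)
  · refine ⟨i₀, Finset.mem_univ _, ?_⟩
    have hne : Lfun i₀ v ≠ 0 := by rw [Lfun_apply]; exact hLi₀
    have : B i₀ * Real.exp (Lfun i₀ x) * Lfun i₀ v * Lfun i₀ v
        = B i₀ * Real.exp (Lfun i₀ x) * (Lfun i₀ v * Lfun i₀ v) := by ring
    rw [this]
    exact mul_pos (mul_pos hBi₀ (Real.exp_pos _)) (mul_self_pos.mpr hne)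


end
end
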